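/- There exists a monotone 2-player temporal cooperative game for which MargSol violates I4OA: in the game with v(1)=3, v(2)=1, v(12)=8, v(21)=5, the optimal sequence is π*=12 with worth 8, but MargSol_1(12) = 3 < 4 = MargSol_1(21). -/
import Mathlib


noncomputable section

/-- Sequences of players (lists over `Fin n`); injective sequences are `Nodup` lists. -/
abbrev TSeq (n : ℕ) := List (Fin n)

/-- `prefBefore π i` is the longest prefix of `π` not containing `i`. -/
def prefBefore {n : ℕ} (π : TSeq n) (i : Fin n) : TSeq n := π.takeWhile (· ≠ i)

/-- The marginal-contribution solution concept. -/
def margSol {n : ℕ} (v : TSeq n → ℝ) (π : TSeq n) (i : Fin n) : ℝ :=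
  if i ∈ π then v (prefBefore π i ++ [i]) - v (prefBefore π i) else 0

/-- The extended Shapley value: average marginal contribution over all full sequences,
    identified with permutations of `Fin n` via `List.ofFn`. -/
def extShap {n : ℕ} (v : TSeq n → ℝ) (i : Fin n) : ℝ :=
  (1 / n.factorial : ℝ) * ∑ σ : Equiv.Perm (Fin n), margSol v (List.ofFn ⇑σ) i

/-- `swapSeq i j π` swaps players `i` and `j` throughout the sequence `π`. -/
def swapSeq {n : ℕ} (i j : Fin n) (π : TSeq n) : TSeq n := π.map (Equiv.swap i j)

/-- The concrete game. -/
noncomputable def vv (π : TSeq 2) : ℝ :=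
  if π = [0] then 3 else if π = [1] then 1 else if π = [0,1] then 8
  else if π = [1,0] then 5 else 0

lemma vv_nil : vv [] = 0 := rfl

lemma enum2 (π : TSeq 2) (h : π.Nodup) :
    π = [] ∨ π = [0] ∨ π = [1] ∨ π = [0,1] ∨ π = [1,0] := by
  match π with
  | [] => exact Or.inl rfl
  | [a] => fin_cases a <;> simp
  | [a,b] =>
    fin_cases a <;> fin_cases b <;> simp_all
  | a::b::c::t =>
    exfalso
    have hl := List.Nodup.length_le_card h
    simp at hl

/-- a concrete monotone 2-player TCG on which MargSol violates I4OA: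
    the optimal sequence is 12 with worth 8, but MargSol₁(12) = 3 < 4 = MargSol₁(21).
    (Players 1, 2 are encoded as 0, 1 : Fin 2.) -/
theorem stmt19 :
    ∃ v : TSeq 2 → ℝ,
      (v [0] = 3 ∧ v [1] = 1 ∧ v [0,1] = 8 ∧ v [1,0] = 5) ∧
      -- monotone
      (∀ π π' : TSeq 2, π'.Nodup → π ≠ [] → π <+: π' → v π ≤ v π') ∧
      -- the optimal sequence is 12
      (v [0,1] = 8 ∧ ∀ π : TSeq 2, π.Nodup → π ≠ [] → v π ≤ 8) ∧
      -- MargSol violates I4OA for player 1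
      (margSol v [0,1] 0 = 3 ∧ margSol v [1,0] 0 = 4 ∧
        ¬ (∀ π : TSeq 2, π.Nodup → ∀ i : Fin 2, margSol v π i ≤ margSol v [0,1] i)) := by
  refine ⟨vv, ⟨by norm_num [vv], by norm_num [vv], by norm_num [vv], by norm_num [vv]⟩,
    ?_, ⟨by norm_num [vv], ?_⟩, ?_, ?_, ?_⟩
  · intro π π' h' hne hp
    have hπ : π.Nodup := hp.sublist.nodup h'
    rcases enum2 π' h' with h1|h1|h1|h1|h1 <;> subst h1 <;>
      rcases enum2 π hπ with h2|h2|h2|h2|h2 <;> subst h2 <;>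
      simp_all [vv, List.IsPrefix] <;> norm_num
  · intro π h hne
    rcases enum2 π h with h1|h1|h1|h1|h1 <;> subst h1 <;> simp_all [vv] <;> norm_num
  · simp only [margSol, prefBefore, vv, vv_nil, List.takeWhile, ne_eq, decide_not]; simp; try norm_num
  · simp only [margSol, prefBefore, vv, vv_nil, List.takeWhile, ne_eq, decide_not]; simp; try norm_num
  · push_neg
    refine ⟨[1,0], by decide, 0, ?_⟩
    simp only [margSol, prefBefore, vv, vv_nil, List.takeWhile, ne_eq, decide_not]; simp; try norm_num
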